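/- Let c be a nonzero complex number and d a positive integer, and let f(z) = c·z^d + e^z. Then the image under f of every unbounded curve is unbounded: for every continuous map γ : [0,∞) → ℂ whose image {γ(t) : t ≥ 0} is not a bounded subset of ℂ, the set {c·γ(t)^d + exp(γ(t)) : t ≥ 0} is not a bounded subset of ℂ. -/

import Mathlib

open Complex Real

/-- Lipschitz-type bound for `z ^ d` on a ball. -/
lemma pow_lip (z₁ z₂ : ℂ) (K : ℝ) (h₁ : ‖z₁‖ ≤ K) (h₂ : ‖z₂‖ ≤ K) :
    ∀ d : ℕ, ‖z₁ ^ d - z₂ ^ d‖ ≤ d * K ^ (d - 1) * ‖z₁ - z₂‖ := by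
  have hK : 0 ≤ K := (norm_nonneg z₁).trans h₁
  intro d
  induction d with
  | zero => simp
  | succ n ih =>
    have key : z₁ ^ (n + 1) - z₂ ^ (n + 1) = z₁ ^ n * (z₁ - z₂) + (z₁ ^ n - z₂ ^ n) * z₂ := by
      ring
    have h1 : ‖z₁ ^ n * (z₁ - z₂)‖ ≤ K ^ n * ‖z₁ - z₂‖ := by
      rw [norm_mul]
      apply mul_le_mul_of_nonneg_right _ (norm_nonneg _)
      rw [norm_pow]
      exact pow_le_pow_left₀ (norm_nonneg _) h₁ n
    have h2 : ‖(z₁ ^ n - z₂ ^ n) * z₂‖ ≤ n * K ^ n * ‖z₁ - z₂‖ := by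
      rw [norm_mul]
      rcases Nat.eq_zero_or_pos n with hn | hn
      · subst hn; simp
      · have hKn : K ^ (n - 1) * K = K ^ n := by
          rw [← pow_succ]; congr 1; omega
        calc ‖z₁ ^ n - z₂ ^ n‖ * ‖z₂‖
            ≤ (n * K ^ (n - 1) * ‖z₁ - z₂‖) * K := by
              apply mul_le_mul ih h₂ (norm_nonneg _)
              positivity
          _ = n * K ^ n * ‖z₁ - z₂‖ := by rw [← hKn]; ring
    calc ‖z₁ ^ (n + 1) - z₂ ^ (n + 1)‖
        ≤ ‖z₁ ^ n * (z₁ - z₂)‖ + ‖(z₁ ^ n - z₂ ^ n) * z₂‖ := by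
          rw [key]; exact norm_add_le _ _
      _ ≤ K ^ n * ‖z₁ - z₂‖ + n * K ^ n * ‖z₁ - z₂‖ := by
          exact add_le_add h1 h2
      _ ≤ (n + 1 : ℕ) * K ^ ((n + 1) - 1) * ‖z₁ - z₂‖ :=
          le_of_eq (by rw [Nat.add_sub_cancel]; push_cast; ring)

/-- If `exp ζ` is close to `1` and `|ζ| ≤ 3`, then `ζ` is small. -/
lemma gap_lemma (ζ : ℂ) (h1 : ‖Complex.exp ζ - 1‖ ≤ 1 / 10)
    (h2 : ‖ζ‖ ≤ 3) : ‖ζ‖ ≤ 1 := by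
  have hE : ‖Complex.exp ζ‖ = Real.exp ζ.re := Complex.norm_exp ζ
  have hEpos : 0 < Real.exp ζ.re := Real.exp_pos _
  have hlo : 9 / 10 ≤ Real.exp ζ.re := by
    have h := norm_add_le (Complex.exp ζ - 1) 1
    simp only [sub_add_cancel] at h
    have : ‖(1 : ℂ)‖ = 1 := by simp
    have h' := norm_add_le (1 - Complex.exp ζ) (Complex.exp ζ)
    simp only [sub_add_cancel] at h'
    rw [this] at h'
    rw [← hE]
    have : ‖1 - Complex.exp ζ‖ = ‖Complex.exp ζ - 1‖ := by
      rw [← norm_neg]; ring_nf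
    linarith
  have hhi : Real.exp ζ.re ≤ 11 / 10 := by
    have h := norm_add_le (Complex.exp ζ - 1) 1
    simp only [sub_add_cancel] at h
    have h1' : ‖(1 : ℂ)‖ = 1 := by simp
    rw [← hE]
    rw [h1'] at h
    linarith
  have hre1 : ζ.re ≤ 1 / 4 := by
    by_contra h
    push_neg at h
    have e1 : (1 : ℝ) + 1 / 4 ≤ Real.exp (1 / 4) := by
      have := Real.add_one_le_exp (1 / 4 : ℝ); linarith
    have e2 : Real.exp (1 / 4) ≤ Real.exp ζ.re := Real.exp_le_exp.2 h.le
    linarith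
  have hre2 : -(1 / 4) ≤ ζ.re := by
    by_contra h
    push_neg at h
    have e1 : Real.exp ζ.re ≤ Real.exp (-(1 / 4)) := Real.exp_le_exp.2 h.le
    have e2 : (1 : ℝ) + 1 / 4 ≤ Real.exp (1 / 4) := by
      have := Real.add_one_le_exp (1 / 4 : ℝ); linarith
    rw [Real.exp_neg] at e1
    have e3 : (Real.exp (1 / 4))⁻¹ ≤ (5 / 4 : ℝ)⁻¹ := by
      apply inv_anti₀ (by norm_num) (by linarith)
    norm_num at e3
    linarith
  have him : |(Complex.exp ζ).im| ≤ 1 / 10 := by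
    have h := (Complex.abs_im_le_norm (Complex.exp ζ - 1)).trans h1
    simpa using h
  have hsin : |Real.sin ζ.im| ≤ 1 / 9 := by
    have he : (Complex.exp ζ).im = Real.exp ζ.re * Real.sin ζ.im := Complex.exp_im ζ
    rw [he, abs_mul, abs_of_pos hEpos] at him
    nlinarith [abs_nonneg (Real.sin ζ.im)]
  have hcosre : 9 / 10 ≤ (Complex.exp ζ).re := by
    have h := (Complex.abs_re_le_norm (Complex.exp ζ - 1)).trans h1
    simp only [Complex.sub_re, Complex.one_re] at h
    have := abs_le.1 h
    linarith [this.1]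
  have hcos : 0 < Real.cos ζ.im := by
    have he : (Complex.exp ζ).re = Real.exp ζ.re * Real.cos ζ.im := Complex.exp_re ζ
    nlinarith [he]
  have himabs : |ζ.im| ≤ 3 := (Complex.abs_im_le_norm ζ).trans h2
  have himlt : |ζ.im| < π / 2 := by
    by_contra h
    push_neg at h
    have h3 : |ζ.im| ≤ π + π / 2 := by
      have := Real.pi_gt_three; linarith
    have := Real.cos_nonpos_of_pi_div_two_le_of_le h h3
    rw [Real.cos_abs] at this
    linarith
  have hsinabs : Real.sin |ζ.im| ≤ 1 / 9 := by
    rcases le_or_gt 0 ζ.im with h | h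
    · rw [_root_.abs_of_nonneg h]; exact (le_abs_self _).trans hsin
    · rw [_root_.abs_of_neg h, Real.sin_neg]
      exact (neg_le_abs _).trans hsin
  have himle : |ζ.im| ≤ 1 / 2 := by
    by_contra h
    push_neg at h
    have hmono : Real.sin (1 / 2) ≤ Real.sin |ζ.im| := by
      apply Real.sin_le_sin_of_le_of_le_pi_div_two _ himlt.le h.le
      linarith [Real.pi_gt_three]
    have hval : (1 : ℝ) / 2 - (1 / 2) ^ 3 / 4 < Real.sin (1 / 2) :=
      by have := Real.sin_gt_sub_cube (x := 1 / 2) (by norm_num); norm_num at this ⊢; linarith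
    norm_num at hval
    linarith
  calc ‖ζ‖ ≤ |ζ.re| + |ζ.im| := Complex.norm_le_abs_re_add_abs_im ζ
    _ ≤ 1 / 4 + 1 / 2 := add_le_add (abs_le.2 ⟨hre2, hre1⟩) himle
    _ ≤ 1 := by norm_num
theorem stmt_0 (c : ℂ) (hc : c ≠ 0) (d : ℕ) (hd : 0 < d)
    (γ : ℝ → ℂ) (hγ : ContinuousOn γ (Set.Ici 0))
    (hub : ¬ Bornology.IsBounded (γ '' Set.Ici 0)) :
    ¬ Bornology.IsBounded ((fun t => c * γ t ^ d + Complex.exp (γ t)) '' Set.Ici 0) := by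
  intro hb
  obtain ⟨M, hM⟩ := isBounded_iff_forall_norm_le.1 hb
  have hM' : ∀ t : ℝ, 0 ≤ t → ‖c * γ t ^ d + Complex.exp (γ t)‖ ≤ M := by
    intro t ht
    have := hM _ ⟨t, ht, rfl⟩
    simpa using this
  have hM0 : 0 ≤ M := le_trans (norm_nonneg _) (hM' 0 le_rfl)
  set cc : ℝ := ‖c‖ with hccdef
  have hcc : 0 < cc := norm_pos_iff.2 hc
  set R : ℝ := max (max 10 (‖γ 0‖)) ((30 * d * cc * 2 ^ (d - 1) + 21 * M + 1) / cc)
    with hRdef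
  have hR10 : (10 : ℝ) ≤ R := le_trans (le_max_left _ _) (le_max_left _ _)
  have hR0 : (0 : ℝ) ≤ R := by linarith
  have hR1 : (1 : ℝ) ≤ R := by linarith
  have hRγ0 : ‖γ 0‖ ≤ R := le_trans (le_max_right _ _) (le_max_left _ _)
  have hRc : 30 * d * cc * 2 ^ (d - 1) + 21 * M + 1 ≤ cc * R := by
    have h := le_max_right (max 10 (‖γ 0‖))
      ((30 * d * cc * 2 ^ (d - 1) + 21 * M + 1) / cc)
    rw [div_le_iff₀ hcc] at h
    rw [hRdef]; linarith
  have hkey : 30 * d * cc * (R + 10) ^ (d - 1) + 21 * M + 1 ≤ cc * R ^ d := by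
    have h2R : (R + 10) ^ (d - 1) ≤ 2 ^ (d - 1) * R ^ (d - 1) := by
      calc (R + 10) ^ (d - 1) ≤ (2 * R) ^ (d - 1) :=
            pow_le_pow_left₀ (by linarith) (by linarith) _
        _ = 2 ^ (d - 1) * R ^ (d - 1) := mul_pow _ _ _
    have hRd1 : (1 : ℝ) ≤ R ^ (d - 1) := one_le_pow₀ hR1
    have hRd : cc * R ^ d = (cc * R) * R ^ (d - 1) := by
      have : R ^ d = R ^ (d - 1) * R := by
        rw [← pow_succ]; congr 1; omega
      rw [this]; ring
    have hc1 : 30 * d * cc * (R + 10) ^ (d - 1) ≤ 30 * d * cc * (2 ^ (d - 1) * R ^ (d - 1)) := by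
      apply mul_le_mul_of_nonneg_left h2R; positivity
    have hc2 : (30 * d * cc * 2 ^ (d - 1) + 21 * M + 1) * R ^ (d - 1) ≤ (cc * R) * R ^ (d - 1) :=
      mul_le_mul_of_nonneg_right hRc (by positivity)
    have hc3 : (21 * M + 1) * 1 ≤ (21 * M + 1) * R ^ (d - 1) :=
      mul_le_mul_of_nonneg_left hRd1 (by linarith)
    rw [hRd]
    nlinarith
  -- the key two-point estimate
  have hest : ∀ z₁ z₂ : ℂ, ‖c * z₁ ^ d + Complex.exp z₁‖ ≤ M →
      ‖c * z₂ ^ d + Complex.exp z₂‖ ≤ M →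
      R ≤ ‖z₁‖ → ‖z₁‖ ≤ R + 10 →
      R ≤ ‖z₂‖ → ‖z₂‖ ≤ R + 10 →
      ‖z₁ - z₂‖ ≤ 3 → ‖z₁ - z₂‖ ≤ 1 := by
    intro z₁ z₂ h1 h2 ha1 hb1 ha2 hb2 h3
    apply gap_lemma _ _ h3
    have hD : 10 * (2 * M + 3 * d * cc * (R + 10) ^ (d - 1)) + M + 1 ≤ cc * R ^ d := by
      linarith
    have he2 : cc * R ^ d - M ≤ ‖Complex.exp z₂‖ := by
      have hp : R ^ d ≤ ‖z₂‖ ^ d := pow_le_pow_left₀ hR0 ha2 d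
      have e1 : ‖c * z₂ ^ d‖ ≤ M + ‖Complex.exp z₂‖ := by
        have h := norm_sub_le (c * z₂ ^ d + Complex.exp z₂) (Complex.exp z₂)
        simp only [add_sub_cancel_right] at h
        linarith
      have e2 : cc * R ^ d ≤ ‖c * z₂ ^ d‖ := by
        rw [norm_mul, norm_pow]
        exact mul_le_mul_of_nonneg_left hp hcc.le
      linarith
    have hnum : ‖Complex.exp z₁ - Complex.exp z₂‖ ≤
        2 * M + 3 * d * cc * (R + 10) ^ (d - 1) := by
      have hid : Complex.exp z₁ - Complex.exp z₂ =
          (c * z₁ ^ d + Complex.exp z₁) - (c * z₂ ^ d + Complex.exp z₂)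
            - c * (z₁ ^ d - z₂ ^ d) := by ring
      rw [hid]
      have t1 := norm_sub_le ((c * z₁ ^ d + Complex.exp z₁) -
        (c * z₂ ^ d + Complex.exp z₂)) (c * (z₁ ^ d - z₂ ^ d))
      have t2 := norm_sub_le (c * z₁ ^ d + Complex.exp z₁)
        (c * z₂ ^ d + Complex.exp z₂)
      have t3 : ‖c * (z₁ ^ d - z₂ ^ d)‖ ≤ cc * (d * (R + 10) ^ (d - 1) * 3) := by
        rw [norm_mul]
        apply mul_le_mul_of_nonneg_left _ (norm_nonneg c)
        calc ‖z₁ ^ d - z₂ ^ d‖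
            ≤ d * (R + 10) ^ (d - 1) * ‖z₁ - z₂‖ :=
              pow_lip z₁ z₂ (R + 10) hb1 hb2 d
          _ ≤ d * (R + 10) ^ (d - 1) * 3 := by
              apply mul_le_mul_of_nonneg_left h3; positivity
      nlinarith
    have hexpos : 0 < ‖Complex.exp z₂‖ := norm_pos_iff.2 (Complex.exp_ne_zero _)
    have hform : Complex.exp (z₁ - z₂) - 1 =
        (Complex.exp z₁ - Complex.exp z₂) / Complex.exp z₂ := by
      rw [Complex.exp_sub]
      field_simp
    rw [hform, norm_div, div_le_iff₀ hexpos]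
    nlinarith
  -- unboundedness of γ
  have hub' : ∀ K : ℝ, ∃ t : ℝ, 0 ≤ t ∧ K < ‖γ t‖ := by
    intro K
    by_contra h
    push_neg at h
    apply hub
    apply isBounded_iff_forall_norm_le.2
    exact ⟨K, by rintro x ⟨t, ht, rfl⟩; simpa using h t ht⟩
  obtain ⟨t₁, ht₁0, ht₁⟩ := hub' (R + 10)
  set s : ℝ → ℝ := fun t => ‖γ t‖ with hsdef
  have hsc : ContinuousOn s (Set.Icc 0 t₁) :=
    continuous_norm.comp_continuousOn (hγ.mono Set.Icc_subset_Ici_self)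
  -- last exit time from the disk of radius R
  set C₁ : Set ℝ := {t ∈ Set.Icc 0 t₁ | s t ≤ R} with hC₁def
  have hC₁closed : IsClosed C₁ :=
    hsc.preimage_isClosed_of_isClosed isClosed_Icc isClosed_Iic
  have hC₁comp : IsCompact C₁ :=
    isCompact_Icc.of_isClosed_subset hC₁closed (Set.sep_subset _ _)
  have hC₁ne : C₁.Nonempty := ⟨0, ⟨le_rfl, ht₁0⟩, hRγ0⟩
  set a : ℝ := sSup C₁ with hadef
  have haC₁ : a ∈ C₁ := hC₁comp.sSup_mem hC₁ne
  have ha0 : 0 ≤ a := haC₁.1.1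
  have hat₁ : a ≤ t₁ := haC₁.1.2
  have hsaR : s a ≤ R := haC₁.2
  have hgtR : ∀ t, a < t → t ≤ t₁ → R < s t := by
    intro t h1 h2
    by_contra h
    push_neg at h
    have : t ∈ C₁ := ⟨⟨le_trans ha0 h1.le, h2⟩, h⟩
    exact absurd (le_csSup hC₁comp.bddAbove this) (not_le.2 h1)
  have halt : a < t₁ := by
    rcases lt_or_eq_of_le hat₁ with h | h
    · exact h
    · exfalso; rw [h] at hsaR; rw [hsdef] at hsaR; simp only at hsaR; linarith
  -- first entrance time to radius R+10 after a
  set C₂ : Set ℝ := {t ∈ Set.Icc a t₁ | R + 10 ≤ s t} with hC₂def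
  have hC₂closed : IsClosed C₂ :=
    (hsc.mono (Set.Icc_subset_Icc_left ha0)).preimage_isClosed_of_isClosed
      isClosed_Icc isClosed_Ici
  have hC₂comp : IsCompact C₂ :=
    isCompact_Icc.of_isClosed_subset hC₂closed (Set.sep_subset _ _)
  have hC₂ne : C₂.Nonempty := ⟨t₁, ⟨hat₁, le_rfl⟩, ht₁.le⟩
  set b : ℝ := sInf C₂ with hbdef
  have hbC₂ : b ∈ C₂ := hC₂comp.sInf_mem hC₂ne
  have hab' : a ≤ b := hbC₂.1.1
  have hbt₁ : b ≤ t₁ := hbC₂.1.2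
  have hsbR : R + 10 ≤ s b := hbC₂.2
  have hab : a < b := by
    rcases lt_or_eq_of_le hab' with h | h
    · exact h
    · exfalso; rw [← h] at hsbR; linarith
  have hltR10 : ∀ t, a ≤ t → t < b → s t < R + 10 := by
    intro t h1 h2
    by_contra h
    push_neg at h
    have : t ∈ C₂ := ⟨⟨h1, le_trans h2.le hbt₁⟩, h⟩
    exact absurd (csInf_le hC₂comp.bddBelow this) (not_le.2 h2)
  -- endpoint values via closure
  have hsaR' : R ≤ s a := by
    have hcl : IsClosed {t ∈ Set.Icc 0 t₁ | R ≤ s t} :=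
      hsc.preimage_isClosed_of_isClosed isClosed_Icc isClosed_Ici
    have hsub : Set.Ioc a t₁ ⊆ {t ∈ Set.Icc 0 t₁ | R ≤ s t} := by
      rintro t ⟨h1, h2⟩
      exact ⟨⟨le_trans ha0 h1.le, h2⟩, (hgtR t h1 h2).le⟩
    have hmem : a ∈ closure (Set.Ioc a t₁) := by
      rw [closure_Ioc halt.ne]
      exact ⟨le_rfl, halt.le⟩
    have := hcl.closure_subset ((closure_mono hsub) hmem)
    exact this.2
  have hsbR' : s b ≤ R + 10 := by
    have hcl : IsClosed {t ∈ Set.Icc 0 t₁ | s t ≤ R + 10} :=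
      hsc.preimage_isClosed_of_isClosed isClosed_Icc isClosed_Iic
    have hsub : Set.Ico a b ⊆ {t ∈ Set.Icc 0 t₁ | s t ≤ R + 10} := by
      rintro t ⟨h1, h2⟩
      exact ⟨⟨le_trans ha0 h1, le_trans h2.le hbt₁⟩, (hltR10 t h1 h2).le⟩
    have hmem : b ∈ closure (Set.Ico a b) := by
      rw [closure_Ico hab.ne]
      exact ⟨hab.le, le_rfl⟩
    have := hcl.closure_subset ((closure_mono hsub) hmem)
    exact this.2
  -- annulus membership
  have hann : ∀ t, t ∈ Set.Icc a b → R ≤ s t ∧ s t ≤ R + 10 := by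
    rintro t ⟨h1, h2⟩
    constructor
    · rcases lt_or_eq_of_le h1 with h | h
      · exact (hgtR t h (le_trans h2 hbt₁)).le
      · rw [← h]; exact hsaR'
    · rcases lt_or_eq_of_le h2 with h | h
      · exact (hltR10 t h1 h).le
      · rw [h]; exact hsbR'
  -- intermediate value argument
  set g : ℝ → ℝ := fun t => ‖γ t - γ a‖ with hgdef
  have hgc : ContinuousOn g (Set.Icc a b) := by
    apply continuous_norm.comp_continuousOn
    exact ((hγ.mono (fun t ht => le_trans ha0 ht.1)).sub continuousOn_const)
  have hga : g a = 0 := by rw [hgdef]; simp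
  have hgb : 10 ≤ g b := by
    have h := norm_add_le (γ b - γ a) (γ a)
    simp only [sub_add_cancel] at h
    have h1 : s b ≤ g b + s a := h
    linarith
  have h2mem : (2 : ℝ) ∈ Set.Icc (g a) (g b) := by
    rw [hga]; exact ⟨by norm_num, by linarith⟩
  obtain ⟨t₂, ht₂mem, ht₂⟩ := intermediate_value_Icc hab.le hgc h2mem
  have ht₂0 : 0 ≤ t₂ := le_trans ha0 ht₂mem.1
  have hannt₂ := hann t₂ ht₂mem
  have hanna := hann a ⟨le_rfl, hab.le⟩
  have hcontr := hest (γ t₂) (γ a) (hM' t₂ ht₂0) (hM' a ha0)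
    hannt₂.1 hannt₂.2 hanna.1 hanna.2 (by rw [show ‖γ t₂ - γ a‖ = g t₂ from rfl, ht₂]; norm_num)
  rw [show ‖γ t₂ - γ a‖ = g t₂ from rfl, ht₂] at hcontr
  norm_num at hcontr
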